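/- Let τ > 0 and ε ∈ (0, 1/2] satisfy Σ_{n∈ℤ, n≠0} exp(−π n² τ²) ≤ ε. For z ∈ [0,1), let μ_z be the probability measure on ℝ supported on ℤ + z that assigns to the point n + z (n ∈ ℤ) mass exp(−π(n+z)²/τ²) / Σ_{m∈ℤ} exp(−π(m+z)²/τ²), and let μ be the mixture measure μ(A) = ∫_{[0,1)} μ_z(A) dz for measurable A ⊆ ℝ. Then μ is a probability measure on ℝ, and the total variation distance between μ and the Gaussian probability measure on ℝ with density x ↦ exp(−πx²/τ²)/τ is at most 4ε. (In words: sampling z uniformly from [0,1) and then outputting a discrete Gaussian of width τ on the coset ℤ + z produces an output y with y ≡ z (mod 1) whose marginal distribution is within statistical distance 4ε of the continuous Gaussian D_τ.) -/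

import Mathlib

open Real MeasureTheory


lemma summable_exp_neg_int_sq {c : ℝ} (hc : 0 < c) :
    Summable fun n : ℤ => rexp (-c * (n : ℝ) ^ 2) := by
  have hgeom : Summable fun n : ℕ => rexp (-c) ^ n :=
    summable_geometric_of_lt_one (Real.exp_pos _).le
      (Real.exp_lt_one_iff.2 (by linarith))
  apply Summable.of_nat_of_neg <;>
  · refine Summable.of_nonneg_of_le (fun n => (Real.exp_pos _).le) (fun n => ?_) hgeom
    rw [← Real.exp_nat_mul]
    apply Real.exp_le_exp.2
    push_cast
    have h2 : (n : ℝ) ≤ (n : ℝ) ^ 2 := by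
      exact_mod_cast Nat.le_self_pow two_ne_zero n
    nlinarith

lemma summable_exp_neg_sq_shift {c : ℝ} (hc : 0 < c) (z : ℝ) :
    Summable fun m : ℤ => rexp (-c * ((m : ℝ) + z) ^ 2) := by
  have h : Summable fun m : ℤ => rexp (c * z ^ 2) * rexp (-(c/2) * (m : ℝ) ^ 2) :=
    (summable_exp_neg_int_sq (by linarith)).mul_left _
  refine Summable.of_nonneg_of_le (fun n => (Real.exp_pos _).le) (fun m => ?_) h
  rw [← Real.exp_add]
  apply Real.exp_le_exp.2
  nlinarith [sq_nonneg ((m : ℝ) + 2 * z)]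


lemma theta_bound {τ ε : ℝ} (hτ : 0 < τ)
    (hsm : ∑' n : {n : ℤ // n ≠ 0}, Real.exp (-π * ((n : ℤ) : ℝ) ^ 2 * τ ^ 2) ≤ ε)
    (z : ℝ) :
    |(∑' m : ℤ, rexp (-π * ((m : ℝ) + z) ^ 2 / τ ^ 2)) - τ| ≤ τ * ε := by
  set a : ℂ := ((τ ^ 2 : ℝ) : ℂ) with ha_def
  have ha : 0 < a.re := by rw [ha_def, Complex.ofReal_re]; exact pow_pos hτ 2
  set b : ℂ := -(Complex.I * (z : ℂ)) with hb_def
  set c : ℤ → ℂ := fun n => Complex.exp (-π * a * (n : ℂ) ^ 2 + 2 * π * b * n) with hc_def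
  have hnorm : ∀ n : ℤ, ‖c n‖ = rexp (-π * ((n : ℤ) : ℝ) ^ 2 * τ ^ 2) := by
    intro n
    have harg : (-(π:ℂ) * a * (n : ℂ) ^ 2 + 2 * π * b * n) =
        ((-π * ((n : ℤ) : ℝ) ^ 2 * τ ^ 2 : ℝ) : ℂ) + ((-2 * π * z * n : ℝ) : ℂ) * Complex.I := by
      rw [ha_def, hb_def]; push_cast; ring
    rw [hc_def]
    simp only [Complex.norm_exp]
    rw [harg, Complex.add_re, Complex.ofReal_re, Complex.mul_re, Complex.ofReal_re,
      Complex.ofReal_im, Complex.I_re, Complex.I_im]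
    ring
  have hsummable : Summable c := by
    apply Summable.of_norm
    simp_rw [hnorm]
    have := summable_exp_neg_int_sq (c := π * τ ^ 2) (by positivity)
    convert this using 2 with n
    ring_nf
  have key := Complex.tsum_exp_neg_quadratic ha b
  -- simplify RHS sqrt
  have hsqrt : a ^ (1 / 2 : ℂ) = (τ : ℂ) := by
    rw [ha_def, show ((1:ℂ)/2) = (((1:ℝ)/2 : ℝ) : ℂ) by norm_num,
      ← Complex.ofReal_cpow (sq_nonneg τ)]
    norm_cast
    rw [← Real.rpow_natCast τ 2, ← Real.rpow_mul hτ.le]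
    norm_num
  have hIb : Complex.I * b = (z : ℂ) := by
    rw [hb_def]; rw [mul_neg, ← mul_assoc, Complex.I_mul_I]; ring
  have hRHS : (∑' n : ℤ, Complex.exp (-π / a * ((n : ℂ) + Complex.I * b) ^ 2)) =
      ((∑' m : ℤ, rexp (-π * ((m : ℝ) + z) ^ 2 / τ ^ 2) : ℝ) : ℂ) := by
    rw [Complex.ofReal_tsum]
    refine tsum_congr fun n => ?_
    rw [hIb, ha_def]
    rw [Complex.ofReal_exp]
    congr 1
    push_cast
    have : ((τ : ℂ) ^ 2) ≠ 0 := pow_ne_zero 2 (by exact_mod_cast hτ.ne')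
    field_simp
  set θz : ℝ := ∑' m : ℤ, rexp (-π * ((m : ℝ) + z) ^ 2 / τ ^ 2) with hθ_def
  have key2 : ((θz : ℂ)) = τ * ∑' n : ℤ, c n := by
    rw [← hc_def] at key
    rw [hRHS, hsqrt] at key
    rw [key]
    have : (τ : ℂ) ≠ 0 := by exact_mod_cast hτ.ne'
    field_simp
  -- split sum at 0
  have hc0 : c 0 = 1 := by simp [hc_def]
  have hsplit : (∑' n : ℤ, c n) = c 0 + ∑' n : {n : ℤ // n ≠ 0}, c n := by
    have h := hsummable.tsum_subtype_add_tsum_subtype_compl ({0} : Set ℤ)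
    rw [← h, tsum_singleton]
    congr 1
  have hnorm_sum : ‖∑' n : {n : ℤ // n ≠ 0}, c n‖ ≤ ε := by
    have hs : Summable fun n : {n : ℤ // n ≠ 0} => ‖c (n : ℤ)‖ := by
      exact (hsummable.norm).subtype _
    refine (norm_tsum_le_tsum_norm hs).trans ?_
    calc ∑' n : {n : ℤ // n ≠ 0}, ‖c (n : ℤ)‖
        = ∑' n : {n : ℤ // n ≠ 0}, rexp (-π * ((n : ℤ) : ℝ) ^ 2 * τ ^ 2) :=
          tsum_congr fun n => hnorm _
      _ ≤ ε := hsm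
  have : ((θz - τ : ℝ) : ℂ) = τ * ((∑' n : {n : ℤ // n ≠ 0}, c n)) := by
    push_cast
    rw [key2, hsplit, hc0]
    ring
  have habs : |θz - τ| = τ * ‖∑' n : {n : ℤ // n ≠ 0}, c n‖ := by
    have := congrArg (fun w : ℂ => ‖w‖) this
    rwa [Complex.norm_real, Real.norm_eq_abs, norm_mul, Complex.norm_real, Real.norm_eq_abs,
      abs_of_pos hτ] at this
  rw [habs]
  exact mul_le_mul_of_nonneg_left hnorm_sum hτ.le


lemma lintegral_Ico_shift (n : ℤ) (F : ℝ → ENNReal) (hF : Measurable F) :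
    ∫⁻ x in Set.Ico ((n : ℝ)) ((n : ℝ) + 1), F x
      = ∫⁻ z in Set.Ico (0 : ℝ) 1, F ((n : ℝ) + z) := by
  have hmp : MeasurePreserving (fun z : ℝ => (n : ℝ) + z) volume volume :=
    measurePreserving_add_left volume _
  have h := hmp.lintegral_comp (f := (Set.Ico ((n:ℝ)) ((n:ℝ)+1)).indicator F)
    (hF.indicator measurableSet_Ico)
  rw [← lintegral_indicator measurableSet_Ico, ← lintegral_indicator measurableSet_Ico, ← h]
  refine lintegral_congr fun z => ?_
  have hmem : ((n : ℝ) + z ∈ Set.Ico ((n:ℝ)) ((n:ℝ)+1)) ↔ z ∈ Set.Ico (0:ℝ) 1 := by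
    simp only [Set.mem_Ico]
    constructor <;> intro hh <;> constructor <;> linarith [hh.1, hh.2]
  by_cases h' : z ∈ Set.Ico (0:ℝ) 1
  · rw [Set.indicator_of_mem (hmem.2 h'), Set.indicator_of_mem h']
  · rw [Set.indicator_of_notMem (fun c => h' (hmem.1 c)), Set.indicator_of_notMem h']

/-- Gaussian preimage sampling: if `τ` exceeds the smoothing parameter `η_ε(ℤ)` (i.e.
`Σ_{n ≠ 0} e^{-πn²τ²} ≤ ε` with `ε ∈ (0,1/2]`), then sampling `z` uniformly from `[0,1)`
and then a discrete Gaussian of width `τ` on the coset `ℤ + z` produces a probability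
distribution within total variation distance `4ε` of the continuous Gaussian `D_τ`. -/
theorem stmt_17 (τ ε : ℝ) (hτ : 0 < τ) (hε : 0 < ε) (hε2 : ε ≤ 1 / 2)
    (hsm : ∑' n : {n : ℤ // n ≠ 0}, Real.exp (-π * ((n : ℤ) : ℝ) ^ 2 * τ ^ 2) ≤ ε) :
    let θ : ℝ → ℝ := fun z => ∑' m : ℤ, Real.exp (-π * ((m : ℝ) + z) ^ 2 / τ ^ 2)
    let μz : ℝ → Measure ℝ := fun z =>
      Measure.sum fun n : ℤ =>
        ENNReal.ofReal (Real.exp (-π * ((n : ℝ) + z) ^ 2 / τ ^ 2) / θ z) •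
          Measure.dirac ((n : ℝ) + z)
    let μ : Measure ℝ := (volume.restrict (Set.Ico (0 : ℝ) 1)).bind μz
    let ν : Measure ℝ :=
      volume.withDensity fun x => ENNReal.ofReal (Real.exp (-π * x ^ 2 / τ ^ 2) / τ)
    IsProbabilityMeasure μ ∧
      ∀ A : Set ℝ, MeasurableSet A →
        μ A ≤ ν A + ENNReal.ofReal (4 * ε) ∧ ν A ≤ μ A + ENNReal.ofReal (4 * ε) := by
  intro θ μz μ ν
  set g : ℤ → ℝ → ℝ := fun n z => rexp (-π * ((n : ℝ) + z) ^ 2 / τ ^ 2) with hg_def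
  have hπτ : (0:ℝ) < π / τ ^ 2 := by positivity
  have hgsum : ∀ z : ℝ, Summable fun m : ℤ => g m z := by
    intro z
    have h := summable_exp_neg_sq_shift hπτ z
    refine h.congr fun m => ?_
    rw [hg_def]
    congr 1
    field_simp
  have hθ_eq : ∀ z, θ z = ∑' m : ℤ, g m z := fun z => rfl
  have hθpos : ∀ z, 0 < θ z := fun z =>
    Summable.tsum_pos (hgsum z) (fun m => (Real.exp_pos _).le) 0 (Real.exp_pos _)
  have hθlb : ∀ z, τ * (1 - ε) ≤ θ z := by
    intro z
    have h := abs_le.1 (theta_bound hτ hsm z)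
    have := h.1
    nlinarith
  have hθub : ∀ z, θ z ≤ τ * (1 + ε) := by
    intro z
    have h := abs_le.1 (theta_bound hτ hsm z)
    have := h.2
    nlinarith
  have hgmeas : ∀ n : ℤ, Measurable fun z : ℝ => g n z := by
    intro n
    apply Continuous.measurable
    fun_prop
  have hθmeas : Measurable θ := by
    let e : ℕ ≃ ℤ := (Denumerable.eqv ℤ).symm
    apply measurable_of_tendsto_metrizable
      (f := fun N z => ∑ i ∈ Finset.range N, g (e i) z)
      (fun N => Finset.measurable_sum _ fun i _ => hgmeas (e i))
    rw [tendsto_pi_nhds]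
    intro z
    have hs : HasSum (fun i : ℕ => g (e i) z) (θ z) := by
      rw [hθ_eq]
      exact (Equiv.hasSum_iff (f := fun m : ℤ => g m z)
        (a := ∑' m : ℤ, g m z) e).2 (hgsum z).hasSum
    exact hs.tendsto_sum_nat
  have hμz_apply : ∀ z : ℝ, ∀ s : Set ℝ, MeasurableSet s →
      μz z s = ∑' n : ℤ, ENNReal.ofReal (g n z / θ z) * s.indicator 1 ((n : ℝ) + z) := by
    intro z s hs
    show (Measure.sum fun n : ℤ =>
      ENNReal.ofReal (g n z / θ z) • Measure.dirac ((n : ℝ) + z)) s = _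
    rw [Measure.sum_apply _ hs]
    refine tsum_congr fun n => ?_
    rw [Measure.smul_apply, Measure.dirac_apply' _ hs, smul_eq_mul]
  have hμzmeas : Measurable μz := by
    apply Measure.measurable_of_measurable_coe
    intro s hs
    simp_rw [hμz_apply _ s hs]
    refine Measurable.ennreal_tsum fun n => Measurable.mul ?_ ?_
    · exact ENNReal.measurable_ofReal.comp ((hgmeas n).div hθmeas)
    · exact (measurable_one.indicator hs).comp (measurable_id.const_add ((n : ℝ)))
  have hμapply : ∀ A : Set ℝ, MeasurableSet A →
      μ A = ∫⁻ z in Set.Ico (0:ℝ) 1, μz z A := by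
    intro A hA
    exact Measure.bind_apply hA hμzmeas.aemeasurable
  have hμz_univ : ∀ z : ℝ, μz z Set.univ = 1 := by
    intro z
    rw [hμz_apply z _ MeasurableSet.univ]
    simp only [Set.indicator_univ, Pi.one_apply, mul_one]
    rw [← ENNReal.ofReal_tsum_of_nonneg (fun n => div_nonneg (Real.exp_pos _).le (hθpos z).le)
      ((hgsum z).div_const _), tsum_div_const, ← hθ_eq z, div_self (hθpos z).ne']
    exact ENNReal.ofReal_one
  have hμuniv : μ Set.univ = 1 := by
    rw [hμapply _ MeasurableSet.univ]
    rw [lintegral_congr hμz_univ, setLIntegral_one, Real.volume_Ico]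
    norm_num
  have hprob : IsProbabilityMeasure μ := ⟨hμuniv⟩
  refine ⟨hprob, ?_⟩
  -- ν preliminaries
  set ρ : ℝ → ℝ := fun x => rexp (-π * x ^ 2 / τ ^ 2) / τ with hρ_def
  have hρmeas : Measurable fun x : ℝ => ENNReal.ofReal (ρ x) := by
    apply ENNReal.measurable_ofReal.comp
    apply Continuous.measurable
    fun_prop
  have hν_apply : ∀ A : Set ℝ, MeasurableSet A →
      ν A = ∫⁻ x in A, ENNReal.ofReal (ρ x) := fun A hA => withDensity_apply _ hA
  have heq : (fun x : ℝ => rexp (-(π / τ ^ 2) * x ^ 2) / τ) = ρ := by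
    funext x
    rw [hρ_def]
    congr 2
    field_simp
  have hint : Integrable ρ := heq ▸ (integrable_exp_neg_mul_sq hπτ).div_const τ
  have hρint : ∫ x, ρ x = 1 := by
    rw [← heq, integral_div, integral_gaussian, show π / (π / τ ^ 2) = τ ^ 2 by field_simp,
      Real.sqrt_sq hτ.le, div_self hτ.ne']
  have hνuniv : ν Set.univ = 1 := by
    rw [hν_apply _ MeasurableSet.univ, Measure.restrict_univ,
      ← ofReal_integral_eq_lintegral_ofReal hint (ae_of_all _ fun x => by positivity), hρint]
    exact ENNReal.ofReal_one
  -- decomposition of ν as a sum over unit intervals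
  have hν_sum : ∀ A : Set ℝ, MeasurableSet A →
      ν A = ∑' n : ℤ, ∫⁻ z in Set.Ico (0:ℝ) 1,
        A.indicator (fun x => ENNReal.ofReal (ρ x)) ((n : ℝ) + z) := by
    intro A hA
    have hFm : Measurable (A.indicator fun x => ENNReal.ofReal (ρ x)) := hρmeas.indicator hA
    rw [hν_apply A hA, ← lintegral_indicator hA]
    have h1 : ∫⁻ x, A.indicator (fun x => ENNReal.ofReal (ρ x)) x
        = ∫⁻ x in ⋃ n : ℤ, Set.Ico (n : ℝ) ((n : ℝ) + 1),
            A.indicator (fun x => ENNReal.ofReal (ρ x)) x := by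
      rw [iUnion_Ico_intCast, Measure.restrict_univ]
    rw [h1, lintegral_iUnion (fun n => measurableSet_Ico) (Set.pairwise_disjoint_Ico_intCast ℝ)]
    exact tsum_congr fun n => lintegral_Ico_shift n _ hFm
  -- decomposition of μ
  have hterm_meas : ∀ (A : Set ℝ), MeasurableSet A → ∀ n : ℤ,
      Measurable fun z : ℝ => ENNReal.ofReal (g n z / θ z) * A.indicator 1 ((n : ℝ) + z) := by
    intro A hA n
    refine Measurable.mul ?_ ?_
    · exact ENNReal.measurable_ofReal.comp ((hgmeas n).div hθmeas)
    · exact (measurable_one.indicator hA).comp (measurable_id.const_add ((n : ℝ)))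
  have hμ_sum : ∀ A : Set ℝ, MeasurableSet A →
      μ A = ∑' n : ℤ, ∫⁻ z in Set.Ico (0:ℝ) 1,
        ENNReal.ofReal (g n z / θ z) * A.indicator 1 ((n : ℝ) + z) := by
    intro A hA
    rw [hμapply A hA, lintegral_congr (fun z => hμz_apply z A hA)]
    exact lintegral_tsum fun n => (hterm_meas A hA n).aemeasurable
  -- pointwise comparisons
  intro A hA
  have claim1 : ∀ (n : ℤ) (z : ℝ),
      ENNReal.ofReal (g n z / θ z) * A.indicator 1 ((n : ℝ) + z)
        ≤ ENNReal.ofReal (1 + 2 * ε) *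
            A.indicator (fun x => ENNReal.ofReal (ρ x)) ((n : ℝ) + z) := by
    intro n z
    by_cases hmem : ((n : ℝ) + z) ∈ A
    · rw [Set.indicator_of_mem hmem, Set.indicator_of_mem hmem, Pi.one_apply, mul_one,
        ← ENNReal.ofReal_mul (by linarith : (0:ℝ) ≤ 1 + 2 * ε)]
      apply ENNReal.ofReal_le_ofReal
      have hg0 : 0 ≤ g n z := (Real.exp_pos _).le
      have hρeq : ρ ((n : ℝ) + z) = g n z / τ := rfl
      rw [hρeq, show (1 + 2 * ε) * (g n z / τ) = ((1 + 2 * ε) * g n z) / τ by ring,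
        div_le_div_iff₀ (hθpos z) hτ]
      nlinarith [mul_le_mul_of_nonneg_left (hθlb z)
          (mul_nonneg (by linarith : (0:ℝ) ≤ 1 + 2 * ε) hg0),
        mul_nonneg (mul_nonneg hg0 hτ.le)
          (mul_nonneg hε.le (by linarith : (0:ℝ) ≤ 1 - 2 * ε))]
    · simp [Set.indicator_of_notMem hmem]
  have claim2 : ∀ (n : ℤ) (z : ℝ),
      A.indicator (fun x => ENNReal.ofReal (ρ x)) ((n : ℝ) + z)
        ≤ ENNReal.ofReal (1 + ε) *
            (ENNReal.ofReal (g n z / θ z) * A.indicator 1 ((n : ℝ) + z)) := by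
    intro n z
    by_cases hmem : ((n : ℝ) + z) ∈ A
    · rw [Set.indicator_of_mem hmem, Set.indicator_of_mem hmem, Pi.one_apply, mul_one,
        ← ENNReal.ofReal_mul (by linarith : (0:ℝ) ≤ 1 + ε)]
      apply ENNReal.ofReal_le_ofReal
      have hg0 : 0 ≤ g n z := (Real.exp_pos _).le
      have hρeq : ρ ((n : ℝ) + z) = g n z / τ := rfl
      rw [hρeq, show (1 + ε) * (g n z / θ z) = ((1 + ε) * g n z) / θ z by ring,
        div_le_div_iff₀ hτ (hθpos z)]
      nlinarith [mul_le_mul_of_nonneg_left (hθub z) hg0]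
    · simp [Set.indicator_of_notMem hmem]
  have hνA1 : ν A ≤ 1 := hνuniv ▸ measure_mono (Set.subset_univ A)
  have hμA1 : μ A ≤ 1 := prob_le_one
  have step1 : μ A ≤ ENNReal.ofReal (1 + 2 * ε) * ν A := by
    rw [hμ_sum A hA, hν_sum A hA, ← ENNReal.tsum_mul_left]
    refine ENNReal.tsum_le_tsum fun n => ?_
    rw [← lintegral_const_mul' _ _ ENNReal.ofReal_ne_top]
    exact lintegral_mono fun z => claim1 n z
  have step2 : ν A ≤ ENNReal.ofReal (1 + ε) * μ A := by
    rw [hμ_sum A hA, hν_sum A hA, ← ENNReal.tsum_mul_left]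
    refine ENNReal.tsum_le_tsum fun n => ?_
    rw [← lintegral_const_mul' _ _ ENNReal.ofReal_ne_top]
    exact lintegral_mono fun z => claim2 n z
  constructor
  · calc μ A ≤ ENNReal.ofReal (1 + 2 * ε) * ν A := step1
      _ = (1 + ENNReal.ofReal (2 * ε)) * ν A := by
          rw [ENNReal.ofReal_add zero_le_one (by positivity), ENNReal.ofReal_one]
      _ = ν A + ENNReal.ofReal (2 * ε) * ν A := by rw [add_mul, one_mul]
      _ ≤ ν A + ENNReal.ofReal (2 * ε) * 1 := add_le_add_right (mul_le_mul' le_rfl hνA1) _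
      _ = ν A + ENNReal.ofReal (2 * ε) := by rw [mul_one]
      _ ≤ ν A + ENNReal.ofReal (4 * ε) :=
          add_le_add le_rfl (ENNReal.ofReal_le_ofReal (by linarith))
  · calc ν A ≤ ENNReal.ofReal (1 + ε) * μ A := step2
      _ = (1 + ENNReal.ofReal ε) * μ A := by
          rw [ENNReal.ofReal_add zero_le_one hε.le, ENNReal.ofReal_one]
      _ = μ A + ENNReal.ofReal ε * μ A := by rw [add_mul, one_mul]
      _ ≤ μ A + ENNReal.ofReal ε * 1 := add_le_add_right (mul_le_mul' le_rfl hμA1) _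
      _ = μ A + ENNReal.ofReal ε := by rw [mul_one]
      _ ≤ μ A + ENNReal.ofReal (4 * ε) :=
          add_le_add le_rfl (ENNReal.ofReal_le_ofReal (by linarith))
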